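/- With Δ = F + H + ℏ − 3|𝓕| − 2|𝓗| − |𝓥_Ω|, one has Δ ≥ 0 and (q−6)|𝓕| + (q−4)|𝓗| + (q−2)Δ + 2q = 8. -/
import Mathlib

theorem stmt_1 (N q F H hbar A B : ℤ) (hq : 3 ≤ q)
    (hA : 0 ≤ A) (hB : 0 ≤ B)
    (hF : 3 * A ≤ F) (hH : 2 * B ≤ H) (hhbar : 4 ≤ hbar)
    (h1 : 2 * A + B + 2 = N * (q - 2))
    (h2 : F + H + hbar = N * q) :
    0 ≤ F + H + hbar - 3 * A - 2 * B - 4 ∧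
    (q - 6) * A + (q - 4) * B + (q - 2) * (F + H + hbar - 3 * A - 2 * B - 4) + 2 * q = 8 := by
  constructor
  · linarith
  · linear_combination (q - 2) * h2 - q * h1
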